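/- Let C ⊆ ℝ^n be a convex set contained in a rational hyperplane (a set {x ∈ ℝ^n : a·x = β} with a ∈ ℚ^n \ {0}, β ∈ ℚ) and such that aff(C) ∩ ℤ^n ≠ ∅. Then C is relatively lattice-free if and only if there exists v ∈ ℤ^n \ rec(C) such that C + ⟨v⟩ is relatively lattice-free. -/

import Mathlib

open Set Pointwise

/-- Dot product of an integer vector with a real vector. -/
def zdot {n : ℕ} (c : Fin n → ℤ) (x : Fin n → ℝ) : ℝ := ∑ i, (c i : ℝ) * x i

/-- Dot product of two real vectors. -/
def rdot {n : ℕ} (c x : Fin n → ℝ) : ℝ := ∑ i, c i * x i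

/-- The integer points of `ℝ^n`. -/
def latticePts (n : ℕ) : Set (Fin n → ℝ) := {x | ∀ i, ∃ z : ℤ, x i = (z : ℝ)}

/-- A polyhedron: finite intersection of halfspaces. -/
def IsPolyhedron {n : ℕ} (Q : Set (Fin n → ℝ)) : Prop :=
  ∃ (m : ℕ) (A : Fin m → Fin n → ℝ) (b : Fin m → ℝ), Q = {x | ∀ i, rdot (A i) x ≤ b i}

/-- A rational polyhedron: the data `A`, `b` can be chosen rational. -/
def IsRatPolyhedron {n : ℕ} (Q : Set (Fin n → ℝ)) : Prop :=
  ∃ (m : ℕ) (A : Fin m → Fin n → ℚ) (b : Fin m → ℚ),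
    Q = {x | ∀ i, ∑ j, (A i j : ℝ) * x j ≤ (b i : ℝ)}

/-- The integer hull of a set: the convex hull of its integer points. -/
def intHull {n : ℕ} (Q : Set (Fin n → ℝ)) : Set (Fin n → ℝ) := convexHull ℝ (Q ∩ latticePts n)

/-- An integral polyhedron: a polyhedron equal to the convex hull of its integer points. -/
def IsIntegralPolyhedron {n : ℕ} (P : Set (Fin n → ℝ)) : Prop :=
  IsPolyhedron P ∧ P = intHull P

/-- The Chvátal–Gomory closure of a set. -/
def cgClosure {n : ℕ} (Q : Set (Fin n → ℝ)) : Set (Fin n → ℝ) :=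
  {x ∈ Q | ∀ (c : Fin n → ℤ) (δ : ℝ), (∀ y ∈ Q, zdot c y ≤ δ) → zdot c x ≤ (⌊δ⌋ : ℝ)}

/-- The `p`-th iterated CG closure. -/
def cgIter {n : ℕ} (p : ℕ) (Q : Set (Fin n → ℝ)) : Set (Fin n → ℝ) := cgClosure^[p] Q

/-- The CG rank: the least `p` with `Q^(p) = Q_I`, as an extended natural number
(`⊤` if no such `p` exists). -/
noncomputable def cgRank {n : ℕ} (Q : Set (Fin n → ℝ)) : ℕ∞ :=
  sInf {p : ℕ∞ | ∃ m : ℕ, p = (m : ℕ∞) ∧ cgIter m Q = intHull Q}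

/-- A relaxation of an integral polyhedron `P`: a rational polyhedron with the
same integer points. -/
def IsRelaxation {n : ℕ} (P Q : Set (Fin n → ℝ)) : Prop :=
  IsRatPolyhedron Q ∧ Q ∩ latticePts n = P ∩ latticePts n

/-- `r*(P) = +∞`: for every `p` some relaxation of `P` has CG rank larger than `p`. -/
def RStarInfinite {n : ℕ} (P : Set (Fin n → ℝ)) : Prop :=
  ∀ p : ℕ, ∃ Q : Set (Fin n → ℝ), IsRelaxation P Q ∧ (p : ℕ∞) < cgRank Q

/-- The recession cone of a convex set. -/
def recCone {n : ℕ} (P : Set (Fin n → ℝ)) : Set (Fin n → ℝ) :=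
  {v | ∀ x ∈ P, ∀ α : ℝ, 0 ≤ α → x + α • v ∈ P}

/-- The linear span `⟨v⟩` of a single vector, as a set. -/
def spanLine {n : ℕ} (v : Fin n → ℝ) : Set (Fin n → ℝ) := {w | ∃ t : ℝ, w = t • v}

/-- A set is relatively lattice-free if its relative interior contains no integer point. -/
def RelLatticeFree {n : ℕ} (C : Set (Fin n → ℝ)) : Prop :=
  intrinsicInterior ℝ C ∩ latticePts n = ∅

/-- A set is lattice-free if its interior contains no integer point. -/
def LatticeFree {n : ℕ} (C : Set (Fin n → ℝ)) : Prop :=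
  interior C ∩ latticePts n = ∅


lemma bezout_fin : ∀ (m : ℕ) (b : Fin m → ℤ), ∃ c : Fin m → ℤ,
    ∑ i, c i * b i = Finset.univ.gcd b := by
  intro m
  induction m with
  | zero => intro b; exact ⟨0, by simp⟩
  | succ k ih =>
    intro b
    obtain ⟨c, hc⟩ := ih (fun i => b i.succ)
    set g : ℤ := Finset.univ.gcd (fun i : Fin k => b i.succ) with hg
    have key : Finset.univ.gcd b = GCDMonoid.gcd (b 0) g := by
      rw [Fin.univ_succ, Finset.cons_eq_insert, Finset.gcd_insert]
      congr 1
      show (Finset.map _ Finset.univ).fold GCDMonoid.gcd 0 b = _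
      rw [Finset.fold_map]
      rfl
    refine ⟨Fin.cons ((b 0).gcdA g) (fun i => (b 0).gcdB g * c i), ?_⟩
    rw [Fin.sum_univ_succ, key, ← Int.coe_gcd, Int.gcd_eq_gcd_ab]
    simp only [Fin.cons_zero, Fin.cons_succ, mul_assoc]
    rw [← Finset.mul_sum, hc]
    ring
lemma primitive_of_rat {n : ℕ} (a : Fin n → ℚ) (ha : a ≠ 0) :
    ∃ (b : Fin n → ℤ) (lam : ℚ) (c : Fin n → ℤ), lam ≠ 0 ∧ (∀ i, (b i : ℚ) = lam * a i) ∧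
      ∑ i, c i * b i = 1 := by
  set d : ℤ := ∏ i, ((a i).den : ℤ) with hd
  have hdpos : 0 < d := Finset.prod_pos (fun i _ => by exact_mod_cast (a i).den_pos)
  set b₀ : Fin n → ℤ := fun i => (a i).num * (d / ((a i).den : ℤ)) with hb₀
  have hden : ∀ i, ((a i).den : ℤ) ∣ d := fun i => Finset.dvd_prod_of_mem _ (Finset.mem_univ i)
  have hb₀q : ∀ i, (b₀ i : ℚ) = a i * d := by
    intro i
    have h1 : ((a i).den : ℤ) * (d / ((a i).den : ℤ)) = d := Int.mul_ediv_cancel' (hden i)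
    have h2 : (a i * (a i).den : ℚ) = (a i).num := Rat.mul_den_eq_num _
    push_cast [hb₀]
    rw [← h2]
    have := congrArg (fun z : ℤ => (z : ℚ)) h1
    push_cast at this
    rw [← this]; ring
  set g : ℤ := Finset.univ.gcd b₀ with hg
  have hgne : g ≠ 0 := by
    intro h0
    apply ha
    funext i
    have := (Finset.gcd_eq_zero_iff.1 h0) i (Finset.mem_univ i)
    have h2 := hb₀q i
    rw [this] at h2
    have hd0 : (d : ℚ) ≠ 0 := by exact_mod_cast hdpos.ne'
    have : a i = 0 := by
      field_simp at h2
      have h3 : a i * (d:ℚ) = 0 := by rw [← h2]; simp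
      exact (mul_eq_zero.1 h3).resolve_right hd0
    simp [this]
  obtain ⟨c, hc⟩ := bezout_fin n b₀
  set b : Fin n → ℤ := fun i => b₀ i / g with hb
  have hgb : ∀ i, g * b i = b₀ i := fun i =>
    Int.mul_ediv_cancel' (Finset.gcd_dvd (Finset.mem_univ i))
  refine ⟨b, (d : ℚ) / (g : ℚ), c, ?_, ?_, ?_⟩
  · have : (g:ℚ) ≠ 0 := by exact_mod_cast hgne
    have hd0 : (d : ℚ) ≠ 0 := by exact_mod_cast hdpos.ne'
    positivity
  · intro i
    have h1 := hb₀q i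
    have h2 := congrArg (fun z : ℤ => (z : ℚ)) (hgb i)
    push_cast at h2
    have hg0 : (g:ℚ) ≠ 0 := by exact_mod_cast hgne
    field_simp
    rw [mul_comm] at h2
    rw [h2, h1]; ring
  · have : g * ∑ i, c i * b i = g := by
      rw [Finset.mul_sum]
      calc ∑ i, g * (c i * b i) = ∑ i, c i * b₀ i := by
            apply Finset.sum_congr rfl
            intro i _
            rw [← hgb i]; ring
        _ = g := hc.trans hg.symm
    exact mul_left_cancel₀ hgne (by rw [this, mul_one])

/-- The linear functional `x ↦ ∑ i, b i * x i` for an integer vector `b`. -/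
def dotL {n : ℕ} (b : Fin n → ℤ) : (Fin n → ℝ) →ₗ[ℝ] ℝ where
  toFun := fun x => ∑ i, (b i : ℝ) * x i
  map_add' := by
    intro x y
    simp [Pi.add_apply, mul_add, Finset.sum_add_distrib]
  map_smul' := by
    intro s x
    simp only [Pi.smul_apply, smul_eq_mul, RingHom.id_apply, Finset.mul_sum]
    apply Finset.sum_congr rfl
    intro i _
    ring

@[simp] lemma dotL_apply {n : ℕ} (b : Fin n → ℤ) (x : Fin n → ℝ) :
    dotL b x = ∑ i, (b i : ℝ) * x i := rfl

variable {n : ℕ}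

lemma mem_intrinsicInterior_iff' {s : Set (Fin n → ℝ)} {z : Fin n → ℝ} :
    z ∈ intrinsicInterior ℝ s ↔
      z ∈ affineSpan ℝ s ∧ ∃ U : Set (Fin n → ℝ), IsOpen U ∧ z ∈ U ∧
        U ∩ (affineSpan ℝ s : Set (Fin n → ℝ)) ⊆ s := by
  constructor
  · rintro ⟨x, hx, rfl⟩
    refine ⟨x.2, ?_⟩
    rw [mem_interior_iff_mem_nhds, nhds_induced, Filter.mem_comap] at hx
    obtain ⟨T, hT, hTs⟩ := hx
    obtain ⟨U, hUT, hUo, hzU⟩ := mem_nhds_iff.1 hT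
    refine ⟨U, hUo, hzU, ?_⟩
    rintro y ⟨hyU, hyA⟩
    exact hTs (hUT hyU : (⟨y, hyA⟩ : affineSpan ℝ s).1 ∈ T)
  · rintro ⟨hzA, U, hUo, hzU, hUs⟩
    refine ⟨⟨z, hzA⟩, ?_, rfl⟩
    rw [mem_interior_iff_mem_nhds, nhds_induced, Filter.mem_comap]
    exact ⟨U, hUo.mem_nhds hzU, fun x hx => hUs ⟨hx, x.2⟩⟩

/-- The hyperplane `{x | f x = r}` as an affine subspace. -/
noncomputable def hypSub (f : (Fin n → ℝ) →ₗ[ℝ] ℝ) (r : ℝ) : AffineSubspace ℝ (Fin n → ℝ) where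
  carrier := {x | f x = r}
  smul_vsub_vadd_mem' := by
    intro c p1 p2 p3 h1 h2 h3
    simp only [Set.mem_setOf_eq] at *
    simp [vsub_eq_sub, vadd_eq_add, map_add, map_smul, map_sub, h1, h2, h3]

lemma mem_add_line {C : Set (Fin n → ℝ)} {v x : Fin n → ℝ} :
    x ∈ C + spanLine v ↔ ∃ c ∈ C, ∃ t : ℝ, x = c + t • v := by
  rw [Set.mem_add]
  constructor
  · rintro ⟨c, hc, w, ⟨t, rfl⟩, rfl⟩; exact ⟨c, hc, t, rfl⟩
  · rintro ⟨c, hc, t, rfl⟩; exact ⟨c, hc, t • v, ⟨t, rfl⟩, rfl⟩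

lemma subset_add_line (C : Set (Fin n → ℝ)) (v : Fin n → ℝ) : C ⊆ C + spanLine v := by
  intro x hx
  exact mem_add_line.2 ⟨x, hx, 0, by simp⟩

/-- Claim 3: projecting a relative interior point of `C + ⟨v⟩` along `v` lands in
the relative interior of `C`, when `f v = 1` and `C ⊆ {f = r}`. -/
lemma proj_relint_add_line {C : Set (Fin n → ℝ)} (f : (Fin n → ℝ) →ₗ[ℝ] ℝ) (r : ℝ)
    {v : Fin n → ℝ} (hfv : f v = 1) (hCf : ∀ x ∈ C, f x = r) {z : Fin n → ℝ}
    (hz : z ∈ intrinsicInterior ℝ (C + spanLine v)) :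
    z - (f z - r) • v ∈ intrinsicInterior ℝ C := by
  have hzCL : z ∈ C + spanLine v := intrinsicInterior_subset hz
  obtain ⟨c₀, hc₀, t₀, rfl⟩ := mem_add_line.1 hzCL
  have hfz : f (c₀ + t₀ • v) = r + t₀ := by
    simp [map_add, map_smul, hfv, hCf c₀ hc₀, smul_eq_mul]
  have hproj : (c₀ + t₀ • v) - (f (c₀ + t₀ • v) - r) • v = c₀ := by
    rw [hfz]; simp
  rw [hproj]
  rw [mem_intrinsicInterior_iff'] at hz ⊢
  obtain ⟨hzS, U, hUo, hzU, hUs⟩ := hz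
  have hAK : ∀ y ∈ affineSpan ℝ C, f y = r :=
    fun y hy => (affineSpan_le (Q := hypSub f r)).2 hCf hy
  have hAle : affineSpan ℝ C ≤ affineSpan ℝ (C + spanLine v) :=
    affineSpan_mono ℝ (subset_add_line C v)
  have hvdir : v ∈ (affineSpan ℝ (C + spanLine v)).direction := by
    have h1 : c₀ ∈ affineSpan ℝ (C + spanLine v) :=
      subset_affineSpan ℝ _ (subset_add_line C v hc₀)
    have h2 : c₀ + v ∈ affineSpan ℝ (C + spanLine v) :=
      subset_affineSpan ℝ _ (mem_add_line.2 ⟨c₀, hc₀, 1, by simp⟩)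
    have := AffineSubspace.vsub_mem_direction h2 h1
    simpa [vsub_eq_sub] using this
  refine ⟨subset_affineSpan ℝ _ hc₀, (fun y => y + t₀ • v) ⁻¹' U, ?_, ?_, ?_⟩
  · exact hUo.preimage (by continuity)
  · simpa using hzU
  · rintro y ⟨hyU, hyA⟩
    have hyS : y + t₀ • v ∈ affineSpan ℝ (C + spanLine v) := by
      have : (t₀ • v) +ᵥ y ∈ affineSpan ℝ (C + spanLine v) :=
        AffineSubspace.vadd_mem_of_mem_direction
          (Submodule.smul_mem _ t₀ hvdir) (hAle hyA)
      simpa [vadd_eq_add, add_comm] using this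
    obtain ⟨c', hc', t', heq⟩ := mem_add_line.1 (hUs ⟨hyU, hyS⟩)
    have hfy : f y = r := hAK y hyA
    have ht : t' = t₀ := by
      have := congrArg f heq
      simp only [map_add, map_smul, hfv, smul_eq_mul, mul_one, hfy, hCf c' hc'] at this
      linarith
    have : y = c' := by
      rw [ht] at heq
      have h2 : y + t₀ • v = c' + t₀ • v := heq
      exact add_right_cancel h2
    rwa [this]

/-- Claim 2: the relative interior of `C` is contained in that of `C + ⟨v⟩`. -/
lemma relint_subset_relint_add_line (C : Set (Fin n → ℝ)) (v : Fin n → ℝ) :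
    intrinsicInterior ℝ C ⊆ intrinsicInterior ℝ (C + spanLine v) := by
  intro z hz
  rw [mem_intrinsicInterior_iff'] at hz
  obtain ⟨hzA, U, hUo, hzU, hUC⟩ := hz
  have hzC : z ∈ C := hUC ⟨hzU, hzA⟩
  have hzCL : z ∈ C + spanLine v := subset_add_line C v hzC
  rw [mem_intrinsicInterior_iff']
  refine ⟨subset_affineSpan ℝ _ hzCL, ?_⟩
  set D := (affineSpan ℝ C).direction with hD
  by_cases hv : v ∈ D
  · -- easy case: the line direction already lies in the affine hull of C
    have hsub : C + spanLine v ⊆ (affineSpan ℝ C : Set (Fin n → ℝ)) := by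
      rintro x hx
      obtain ⟨c, hc, t, rfl⟩ := mem_add_line.1 hx
      have : (t • v) +ᵥ c ∈ affineSpan ℝ C :=
        AffineSubspace.vadd_mem_of_mem_direction (Submodule.smul_mem _ t hv)
          (subset_affineSpan ℝ _ hc)
      simpa [vadd_eq_add, add_comm] using this
    have hle : affineSpan ℝ (C + spanLine v) ≤ affineSpan ℝ C := affineSpan_le.2 hsub
    refine ⟨U, hUo, hzU, ?_⟩
    rintro y ⟨hyU, hyS⟩
    exact subset_add_line C v (hUC ⟨hyU, hle hyS⟩)
  · -- hard case: build a linear functional `f` with `f v = 1`, `f ≡ 0` on `D`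
    obtain ⟨φ, hφ⟩ : ∃ φ : Module.Dual ℝ ((Fin n → ℝ) ⧸ D), φ (D.mkQ v) ≠ 0 := by
      by_contra h
      push_neg at h
      have : D.mkQ v = 0 := (Module.forall_dual_apply_eq_zero_iff ℝ _).1 h
      exact hv ((Submodule.Quotient.mk_eq_zero D).1 this)
    set f : (Fin n → ℝ) →ₗ[ℝ] ℝ := (φ (D.mkQ v))⁻¹ • (φ.comp D.mkQ) with hf
    have hfv : f v = 1 := by
      simp only [hf, LinearMap.smul_apply, LinearMap.comp_apply, smul_eq_mul]
      exact inv_mul_cancel₀ hφ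
    have hfD : ∀ w ∈ D, f w = 0 := by
      intro w hw
      have : D.mkQ w = 0 := (Submodule.Quotient.mk_eq_zero D).2 hw
      simp [hf, this]
    have hfcont : Continuous f := f.continuous_of_finiteDimensional
    set P : (Fin n → ℝ) → (Fin n → ℝ) := fun x => x - (f x - f z) • v with hP
    have hPcont : Continuous P := by
      apply Continuous.sub continuous_id
      exact ((hfcont.sub continuous_const).smul continuous_const)
    refine ⟨P ⁻¹' U, hUo.preimage hPcont, ?_, ?_⟩
    · simp [hP]; simpa [hP] using hzU
    · rintro x ⟨hxU, hxS⟩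
      -- decompose x = p + t • v with p ∈ affineSpan C
      have hle : affineSpan ℝ (C + spanLine v) ≤ AffineSubspace.mk' z (D ⊔ Submodule.span ℝ {v}) := by
        apply affineSpan_le.2
        rintro x' hx'
        obtain ⟨c, hc, t, rfl⟩ := mem_add_line.1 hx'
        rw [SetLike.mem_coe, AffineSubspace.mem_mk']
        have h1 : c - z ∈ D :=
          AffineSubspace.vsub_mem_direction (subset_affineSpan ℝ _ hc) hzA
        have h2 : t • v ∈ Submodule.span ℝ {v} :=
          Submodule.smul_mem _ t (Submodule.mem_span_singleton_self v)
        have : (c + t • v) -ᵥ z = (c - z) + t • v := by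
          simp only [vsub_eq_sub]; abel
        rw [this]
        exact Submodule.mem_sup.2 ⟨c - z, h1, t • v, h2, rfl⟩
      have hxmk := hle hxS
      rw [AffineSubspace.mem_mk'] at hxmk
      obtain ⟨dd, hdd, w, hw, hdw⟩ := Submodule.mem_sup.1 hxmk
      obtain ⟨t, rfl⟩ := Submodule.mem_span_singleton.1 hw
      have hxeq : x = (z + dd) + t • v := by
        have h1 : x - z = dd + t • v := by rw [hdw]; rfl
        have h2 : x = z + (dd + t • v) := by rw [← h1]; abel
        rw [h2]; abel
      have hpA : z + dd ∈ affineSpan ℝ C := by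
        have : dd +ᵥ z ∈ affineSpan ℝ C :=
          AffineSubspace.vadd_mem_of_mem_direction hdd hzA
        simpa [vadd_eq_add, add_comm] using this
      have hfp : f (z + dd) = f z := by
        simp [map_add, hfD dd hdd]
      have hPx : P x = z + dd := by
        rw [hP]
        simp only [hxeq, map_add, map_smul, hfv, smul_eq_mul, mul_one, hfp]
        have hco : f z + t - f z = t := by ring
        rw [hco]
        abel
      have : z + dd ∈ C := hUC ⟨by rw [← hPx]; exact hxU, hpA⟩
      rw [hxeq]
      exact mem_add_line.2 ⟨z + dd, this, t, rfl⟩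

theorem stmt_5 {n : ℕ} (C : Set (Fin n → ℝ)) (hC : Convex ℝ C)
    (a : Fin n → ℚ) (ha : a ≠ 0) (β : ℚ)
    (hsub : C ⊆ {x : Fin n → ℝ | ∑ i, (a i : ℝ) * x i = (β : ℝ)})
    (haff : ((affineSpan ℝ C : Set (Fin n → ℝ)) ∩ latticePts n).Nonempty) :
    RelLatticeFree C ↔
      ∃ v : Fin n → ℝ, v ∈ latticePts n ∧ v ∉ recCone C ∧
        RelLatticeFree (C + spanLine v) := by
  obtain ⟨z₀, hz₀A, hz₀lat⟩ := haff
  have hCne : C.Nonempty := (affineSpan_nonempty ℝ).1 ⟨z₀, hz₀A⟩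
  constructor
  · intro hLF
    obtain ⟨b, lam, c, hlam, hb, hc1⟩ := primitive_of_rat a ha
    set f : (Fin n → ℝ) →ₗ[ℝ] ℝ := dotL b with hfdef
    set r : ℝ := (lam : ℝ) * (β : ℝ) with hrdef
    have hbR : ∀ i, (b i : ℝ) = (lam : ℝ) * (a i : ℝ) := by
      intro i
      exact_mod_cast congrArg (fun q : ℚ => (q : ℝ)) (hb i)
    have hCf : ∀ x ∈ C, f x = r := by
      intro x hx
      have hx' : ∑ i, (a i : ℝ) * x i = (β : ℝ) := hsub hx
      calc f x = ∑ i, (lam : ℝ) * ((a i : ℝ) * x i) := by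
            rw [hfdef, dotL_apply]
            apply Finset.sum_congr rfl
            intro i _
            rw [hbR i]; ring
        _ = (lam : ℝ) * ∑ i, (a i : ℝ) * x i := by rw [Finset.mul_sum]
        _ = r := by rw [hx']
    set v : Fin n → ℝ := fun i => (c i : ℝ) with hvdef
    have hfv : f v = 1 := by
      rw [hfdef, dotL_apply]
      have : ∑ i, (b i : ℝ) * (c i : ℝ) = ((∑ i, c i * b i : ℤ) : ℝ) := by
        push_cast
        apply Finset.sum_congr rfl
        intro i _; ring
      rw [hvdef]
      simp only []
      rw [this, hc1]
      norm_num
    have hAK : ∀ y ∈ affineSpan ℝ C, f y = r :=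
      fun y hy => (affineSpan_le (Q := hypSub f r)).2 hCf hy
    -- r is an integer
    choose w hw using hz₀lat
    have hrint : r = ((∑ i, b i * w i : ℤ) : ℝ) := by
      rw [← hAK z₀ hz₀A, hfdef, dotL_apply]
      push_cast
      apply Finset.sum_congr rfl
      intro i _
      rw [hw i]
    refine ⟨v, fun i => ⟨c i, rfl⟩, ?_, ?_⟩
    · intro hrec
      obtain ⟨x₀, hx₀⟩ := hCne
      have h1 : x₀ + (1:ℝ) • v ∈ C := hrec x₀ hx₀ 1 zero_le_one
      have h2 : f (x₀ + (1:ℝ) • v) = r := hCf _ h1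
      rw [map_add, map_smul, hfv, hCf x₀ hx₀] at h2
      simp at h2
    · rw [RelLatticeFree, Set.eq_empty_iff_forall_notMem]
      rintro z ⟨hzi, hzlat⟩
      have hc' := proj_relint_add_line f r hfv hCf hzi
      choose zi hzi' using hzlat
      have hfz : f z = ((∑ i, b i * zi i : ℤ) : ℝ) := by
        rw [hfdef, dotL_apply]
        push_cast
        apply Finset.sum_congr rfl
        intro i _
        rw [hzi' i]
      set k : ℤ := (∑ i, b i * zi i) - (∑ i, b i * w i) with hk
      have hfzr : f z - r = (k : ℝ) := by
        rw [hfz, hrint, hk]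
        push_cast
        ring
      have hc'lat : z - (f z - r) • v ∈ latticePts n := by
        intro i
        refine ⟨zi i - k * c i, ?_⟩
        simp only [Pi.sub_apply, Pi.smul_apply, smul_eq_mul, hfzr, hvdef]
        push_cast
        rw [hzi' i]
      exact Set.eq_empty_iff_forall_notMem.1 hLF _ ⟨hc', hc'lat⟩
  · rintro ⟨v, hvlat, hvrec, hLF⟩
    rw [RelLatticeFree, Set.eq_empty_iff_forall_notMem]
    rintro z ⟨hzi, hzlat⟩
    exact Set.eq_empty_iff_forall_notMem.1 hLF _
      ⟨relint_subset_relint_add_line C v hzi, hzlat⟩
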